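/- Let P(x) = ∏_{j=1}^m (x − x_j)^{α_j} be a monic degree-n real polynomial with distinct real roots x_j of multiplicities α_j. Let 0 < q < 1, c > 0, d = min_{i≠j}|x_i − x_j|, d − 2c > 0, and c²(n − α_i) < (α_i d − 2nc)(d − 2c) for all i. If the initial approximations satisfy |x_i^[0] − x_i| ≤ cq for all i, then the sequences defined by the iteration x_i^[k+1] = x_i^[k] − α_i(P(x_i^[k])/P'(x_i^[k]))·[1 + (P(x_i^[k])/P'(x_i^[k]))·(Q_i^[k]'(x_i^[k])/Q_i^[k](x_i^[k]))], with Q_i^[k](x) = ∏_{j≠i}(x − x_j^[k])^{α_j}, satisfy |x_i^[k] − x_i| ≤ c·q^{3^k} for all k ≥ 0 and all i. -/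

import Mathlib

open Finset

lemma hasDerivAt_prod_pow {ι : Type*} [DecidableEq ι] (s : Finset ι)
    (y : ι → ℝ) (α : ι → ℕ) (t : ℝ) (h : ∀ j ∈ s, t - y j ≠ 0) :
    HasDerivAt (fun u => ∏ j ∈ s, (u - y j) ^ α j)
      ((∏ j ∈ s, (t - y j) ^ α j) * ∑ j ∈ s, (α j : ℝ) / (t - y j)) t := by
  have H : ∀ j ∈ s, HasDerivAt (fun u : ℝ => (u - y j) ^ α j)
      ((α j : ℝ) * (t - y j) ^ (α j - 1)) t := fun j _ => by
    simpa using ((hasDerivAt_id t).sub_const (y j)).fun_pow (α j)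
  have h2 := HasDerivAt.fun_finsetProd H
  refine h2.congr_deriv (Eq.symm ?_)
  rw [Finset.mul_sum]
  refine Finset.sum_congr rfl fun j hj => ?_
  rw [smul_eq_mul, ← Finset.prod_erase_mul s _ hj]
  rcases Nat.eq_zero_or_pos (α j) with h0 | h1
  · simp [h0]
  · have hz := h j hj
    have hpow : (t - y j) ^ α j = (t - y j) ^ (α j - 1) * (t - y j) := by
      rw [← pow_succ, Nat.sub_add_cancel h1]
    rw [hpow]
    field_simp

lemma chebyshev_final (a nn β c d ρ : ℝ) (hc : 0 < c) (hρ : 0 < ρ)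
    (hd1 : 0 < d - c) (hd : 0 < d - 2*c)
    (hkey : c^2*β*(a*(d-c) + β*(d-2*c)) ≤ (d-2*c)*(a*d - c*nn)^2) :
    ρ^2 * (a*(β*ρ/((d-c)*(d-2*c))) + ρ*(β/(d-c))^2) * c^2
      ≤ ρ^3 * ((a*d - c*nn)/(d-c))^2 := by
  have hkey' := mul_le_mul_of_nonneg_left hkey (le_of_lt (pow_pos hρ 3))
  have h1 : (d - c) ≠ 0 := hd1.ne'
  have h2 : (d - 2*c) ≠ 0 := hd.ne'
  have h2' : d - c * 2 ≠ 0 := by rw [mul_comm]; exact h2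
  have e1 : ρ^2 * (a*(β*ρ/((d-c)*(d-2*c))) + ρ*(β/(d-c))^2) * c^2
      = ρ^3 * (c^2*β*(a*(d-c) + β*(d-2*c))) / ((d-c)^2 * (d-2*c)) := by
    field_simp
  have e2 : ρ^3 * ((a*d - c*nn)/(d-c))^2
      = ρ^3 * ((d-2*c)*(a*d - c*nn)^2) / ((d-c)^2 * (d-2*c)) := by
    field_simp
  rw [e1, e2]
  exact div_le_div_of_nonneg_right hkey' (by positivity)

lemma chebyshev_key_ineq (a b c d : ℝ) (ha : 1 ≤ a) (hb : 0 ≤ b) (hc : 0 < c)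
    (hd : 0 < d - 2*c) (hcond : c^2*b < (a*d - 2*(a+b)*c)*(d-2*c)) :
    c^2*b*(a*(d-c) + b*(d-2*c)) ≤ (d-2*c)*(a*d - c*(a+b))^2 := by
  have h1 : b*c*(c + 2*(d-2*c)) < a*(d-2*c)^2 := by nlinarith
  have h2 : b*c*(2*(d-2*c)+c) < a*(d-c)*(d-2*c) := by
    nlinarith [mul_nonneg (mul_nonneg (le_trans zero_le_one ha) hd.le) hc.le]
  nlinarith [mul_lt_mul_of_pos_left h2 (show (0:ℝ) < a*(d-c) by nlinarith)]

/-- Theorem 1 of the paper: cubic convergence of the generalized Chebyshev method.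
If `0 < q < 1`, `c > 0`, `d` is a lower bound on the pairwise distances of the
roots with `d − 2c > 0` and `c²(n − α i) < (α i d − 2nc)(d − 2c)` for all `i`,
and the initial approximations satisfy `|X 0 i − x i| ≤ c q`, then the iterates of
`x_i^[k+1] = x_i^[k] − α i (P/P')(x_i^[k])·[1 + (P/P')(x_i^[k])·(Qᵢ'/Qᵢ)(x_i^[k])]`
satisfy `|X k i − x i| ≤ c q^(3^k)` for all `k` and `i`. -/
theorem chebyshev_cubic_convergence (m n : ℕ) (x : Fin m → ℝ) (α : Fin m → ℕ)
    (c d q : ℝ)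
    (hdist : Function.Injective x) (hα : ∀ j, 0 < α j)
    (hn : (n : ℝ) = ∑ j : Fin m, (α j : ℝ))
    (hq0 : 0 < q) (hq1 : q < 1) (hc : 0 < c)
    (hsep : ∀ i j, i ≠ j → d ≤ |x i - x j|)
    (hd : 0 < d - 2 * c)
    (hcond : ∀ i, c ^ 2 * ((n : ℝ) - (α i : ℝ)) <
      ((α i : ℝ) * d - 2 * (n : ℝ) * c) * (d - 2 * c))
    (P : ℝ → ℝ) (hP : P = fun t => ∏ j : Fin m, (t - x j) ^ (α j))
    (X : ℕ → Fin m → ℝ)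
    (hX0 : ∀ i, |X 0 i - x i| ≤ c * q)
    (hXrec : ∀ k i,
      X (k + 1) i = X k i - (α i : ℝ) * (P (X k i) / deriv P (X k i)) *
        (1 + (P (X k i) / deriv P (X k i)) *
          (deriv (fun t => ∏ j ∈ Finset.univ.erase i, (t - X k j) ^ (α j)) (X k i) /
            ∏ j ∈ Finset.univ.erase i, (X k i - X k j) ^ (α j)))) :
    ∀ k i, |X k i - x i| ≤ c * q ^ (3 ^ k) := by
  intro k
  induction k with
  | zero => intro i; simpa using hX0 i
  | succ k ih =>
    intro i
    have hd1 : (0:ℝ) < d - c := by linarith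
    set ρ := c * q ^ 3 ^ k with hρ
    clear_value ρ
    have hρpos : 0 < ρ := by rw [hρ]; positivity
    have hqk : q ^ 3 ^ k ≤ q :=
      pow_le_of_le_one hq0.le hq1.le (pow_ne_zero _ (by norm_num))
    have hρc : ρ ≤ c := by
      rw [hρ]; nlinarith
    have hgoal_eq : ρ ^ 3 / c ^ 2 = c * q ^ 3 ^ (k + 1) := by
      rw [pow_succ 3 k, pow_mul, hρ]
      field_simp
    have hgoalpos : 0 < c * q ^ 3 ^ (k + 1) := by positivity
    have habs : |X k i - x i| ≤ ρ := ih i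
    by_cases he0 : X k i - x i = 0
    · -- the approximation is already exact
      have hPt : P (X k i) = 0 := by
        rw [hP]
        refine Finset.prod_eq_zero (Finset.mem_univ i) ?_
        rw [he0]
        exact zero_pow (hα i).ne'
      rw [hXrec k i, hPt]
      simp only [zero_div, mul_zero, zero_mul, sub_zero]
      rw [he0, abs_zero]
      exact hgoalpos.le
    · -- main case
      set e := X k i - x i with he
      clear_value e
      have ha1 : (1:ℝ) ≤ (α i : ℝ) := by exact_mod_cast hα i
      set β := ∑ j ∈ Finset.univ.erase i, (α j : ℝ) with hβ
      clear_value β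
      have hβ0 : 0 ≤ β := by
        rw [hβ]; exact Finset.sum_nonneg fun j _ => (α j).cast_nonneg
      have hnβ : (n:ℝ) = (α i : ℝ) + β := by
        rw [hn, ← Finset.add_sum_erase _ _ (Finset.mem_univ i), hβ]
      have hn0 : (0:ℝ) ≤ (n:ℝ) := Nat.cast_nonneg n
      have hApos : 0 < (α i:ℝ) * d - 2 * n * c := by
        nlinarith [hcond i, sq_nonneg c, hβ0, hnβ]
      have hA : 0 < (α i:ℝ) * d - c * n := by
        nlinarith [mul_nonneg hc.le hn0]
      -- distance bounds
      have hdx : ∀ j ∈ Finset.univ.erase i, d - c ≤ |X k i - x j| := by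
        intro j hj
        have hji : j ≠ i := Finset.ne_of_mem_erase hj
        have h1 := hsep i j (Ne.symm hji)
        have h2 : |x i - x j| ≤ |x i - X k i| + |X k i - x j| := abs_sub_le _ _ _
        have h3 : |x i - X k i| = |e| := by rw [abs_sub_comm, ← he]
        rw [h3] at h2
        linarith [habs, hρc]
      have hdX : ∀ j ∈ Finset.univ.erase i, d - 2*c ≤ |X k i - X k j| := by
        intro j hj
        have hji : j ≠ i := Finset.ne_of_mem_erase hj
        have h1 := hsep i j (Ne.symm hji)
        have h2 : |x i - x j| ≤ |x i - X k i| + |X k i - x j| := abs_sub_le _ _ _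
        have h2' : |X k i - x j| ≤ |X k i - X k j| + |X k j - x j| := abs_sub_le _ _ _
        have h3 : |x i - X k i| = |e| := by rw [abs_sub_comm, ← he]
        rw [h3] at h2
        have h4 := ih j
        linarith [habs, hρc]
      -- nonvanishing
      have hxne : ∀ j, X k i - x j ≠ 0 := by
        intro j
        by_cases hji : j = i
        · rw [hji, ← he]; exact he0
        · have hmem : j ∈ Finset.univ.erase i :=
            Finset.mem_erase.mpr ⟨hji, Finset.mem_univ _⟩
          intro hz
          have := hdx j hmem
          rw [hz, abs_zero] at this
          linarith
      have hXne : ∀ j ∈ Finset.univ.erase i, X k i - X k j ≠ 0 := by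
        intro j hj hz
        have := hdX j hj
        rw [hz, abs_zero] at this
        linarith
      -- sums
      set Sig := ∑ j ∈ Finset.univ.erase i, (α j:ℝ) / (X k i - x j) with hSig
      clear_value Sig
      set S := ∑ j ∈ Finset.univ.erase i, (α j:ℝ) / (X k i - X k j) with hS
      clear_value S
      set Den := (α i:ℝ) + e * Sig with hDen
      clear_value Den
      -- derivative of P
      have hPder : deriv P (X k i) =
          P (X k i) * ∑ j : Fin m, (α j:ℝ) / (X k i - x j) := by
        rw [hP]
        exact (hasDerivAt_prod_pow Finset.univ x α (X k i) (fun j _ => hxne j)).deriv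
      have hPne : P (X k i) ≠ 0 := by
        rw [hP]
        exact Finset.prod_ne_zero_iff.mpr fun j _ => pow_ne_zero _ (hxne j)
      have hσ : ∑ j : Fin m, (α j:ℝ) / (X k i - x j) = (α i:ℝ) / e + Sig := by
        rw [← Finset.add_sum_erase _ _ (Finset.mem_univ i), ← he, ← hSig]
      -- bound on Sig
      have hSigb : |Sig| ≤ β / (d - c) := by
        rw [hSig, hβ]
        calc |∑ j ∈ Finset.univ.erase i, (α j:ℝ) / (X k i - x j)|
            ≤ ∑ j ∈ Finset.univ.erase i, |(α j:ℝ) / (X k i - x j)| :=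
              Finset.abs_sum_le_sum_abs _ _
          _ ≤ ∑ j ∈ Finset.univ.erase i, (α j:ℝ) / (d - c) := by
              refine Finset.sum_le_sum fun j hj => ?_
              rw [abs_div, abs_of_nonneg (Nat.cast_nonneg _)]
              exact div_le_div_of_nonneg_left (Nat.cast_nonneg _) hd1 (hdx j hj)
          _ = (∑ j ∈ Finset.univ.erase i, (α j:ℝ)) / (d - c) := by rw [← Finset.sum_div]
      have hSigb' : |Sig| * (d - c) ≤ β := by
        rw [← le_div_iff₀ hd1]; exact hSigb
      -- lower bound on Den
      have habsc : |e| ≤ c := habs.trans hρc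
      have hDenlb : ((α i:ℝ) * d - c * n) / (d - c) ≤ |Den| := by
        rw [div_le_iff₀ hd1]
        have h1 : |(α i:ℝ)| ≤ |Den| + |e * Sig| := by
          have : |Den + -(e * Sig)| ≤ |Den| + |-(e * Sig)| := abs_add_le Den (-(e * Sig))
          simp only [hDen] at this ⊢
          rw [abs_neg] at this
          convert this using 2
          ring
        rw [abs_of_nonneg (by linarith : (0:ℝ) ≤ (α i:ℝ)), abs_mul] at h1
        have h2 : |e| * (|Sig| * (d - c)) ≤ c * β :=
          mul_le_mul habsc hSigb' (mul_nonneg (abs_nonneg _) hd1.le) hc.le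
        have h3 := mul_le_mul_of_nonneg_right h1 hd1.le
        have h4 : (|Den| + |e| * |Sig|) * (d - c)
            = |Den| * (d - c) + |e| * (|Sig| * (d - c)) := by ring
        rw [h4] at h3
        have h5 : c * (n:ℝ) = c * (α i:ℝ) + c * β := by rw [hnβ]; ring
        linarith [h2, h3, h5]
      have hLpos : 0 < ((α i:ℝ) * d - c * n) / (d - c) := div_pos hA hd1
      have hDen0 : Den ≠ 0 := by
        intro h
        rw [h, abs_zero] at hDenlb
        linarith
      have hσe : (α i:ℝ) / e + Sig = Den / e := by
        rw [hDen]; field_simp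
      have hu : P (X k i) / deriv P (X k i) = e / Den := by
        rw [hPder, hσ, hσe, div_mul_cancel_left₀ hPne, inv_div]
      -- derivative of Q
      have hQne : (∏ j ∈ Finset.univ.erase i, (X k i - X k j) ^ (α j)) ≠ 0 :=
        Finset.prod_ne_zero_iff.mpr fun j hj => pow_ne_zero _ (hXne j hj)
      have hq' : deriv (fun t => ∏ j ∈ Finset.univ.erase i, (t - X k j) ^ (α j)) (X k i) /
          ∏ j ∈ Finset.univ.erase i, (X k i - X k j) ^ (α j) = S := by
        rw [(hasDerivAt_prod_pow (Finset.univ.erase i) (X k) α (X k i) hXne).deriv, hS,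
          mul_comm, mul_div_assoc, div_self hQne, mul_one]
      -- error formula
      have herr : X (k+1) i - x i =
          e ^ 2 * ((α i:ℝ) * (Sig - S) + e * Sig ^ 2) / Den ^ 2 := by
        rw [hXrec k i, hu, hq']
        have hXk : X k i = x i + e := by rw [he]; ring
        rw [hXk, hDen]
        have hD : (α i:ℝ) + e * Sig ≠ 0 := by rw [hDen] at hDen0; exact hDen0
        field_simp
        ring
      -- bound on Sig - S
      have hSd : |Sig - S| ≤ β * ρ / ((d - c) * (d - 2*c)) := by
        rw [hSig, hS, ← Finset.sum_sub_distrib]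
        calc |∑ j ∈ Finset.univ.erase i,
              ((α j:ℝ) / (X k i - x j) - (α j:ℝ) / (X k i - X k j))|
            ≤ ∑ j ∈ Finset.univ.erase i,
              |(α j:ℝ) / (X k i - x j) - (α j:ℝ) / (X k i - X k j)| :=
              Finset.abs_sum_le_sum_abs _ _
          _ ≤ ∑ j ∈ Finset.univ.erase i, (α j:ℝ) * ρ / ((d - c) * (d - 2*c)) := by
              refine Finset.sum_le_sum fun j hj => ?_
              rw [div_sub_div _ _ (hxne j) (hXne j hj), abs_div]
              have h1 : |(α j:ℝ) * (X k i - X k j) - (X k i - x j) * (α j:ℝ)| ≤ (α j:ℝ) * ρ := by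
                have hr : (α j:ℝ) * (X k i - X k j) - (X k i - x j) * (α j:ℝ)
                    = (α j:ℝ) * (x j - X k j) := by ring
                rw [hr, abs_mul, abs_of_nonneg (Nat.cast_nonneg _), abs_sub_comm]
                exact mul_le_mul_of_nonneg_left (ih j) (Nat.cast_nonneg _)
              have h2 : (d - c) * (d - 2*c) ≤ |(X k i - x j) * (X k i - X k j)| := by
                rw [abs_mul]
                exact mul_le_mul (hdx j hj) (hdX j hj) hd.le (abs_nonneg _)
              exact div_le_div₀ (by positivity) h1 (mul_pos hd1 hd) h2
          _ = β * ρ / ((d - c) * (d - 2*c)) := by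
              rw [← Finset.sum_div, ← Finset.sum_mul, hβ]
      -- bound on numerator
      have hSig2 : |Sig| ^ 2 ≤ (β / (d - c)) ^ 2 :=
        pow_le_pow_left₀ (abs_nonneg _) hSigb 2
      have hNb : |(α i:ℝ) * (Sig - S) + e * Sig ^ 2| ≤
          (α i:ℝ) * (β * ρ / ((d - c) * (d - 2*c))) + ρ * (β / (d - c)) ^ 2 := by
        calc |(α i:ℝ) * (Sig - S) + e * Sig ^ 2|
            ≤ |(α i:ℝ) * (Sig - S)| + |e * Sig ^ 2| := abs_add_le _ _
          _ ≤ (α i:ℝ) * (β * ρ / ((d - c) * (d - 2*c))) + ρ * (β / (d - c)) ^ 2 := by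
              rw [abs_mul, abs_mul, abs_of_nonneg (by linarith : (0:ℝ) ≤ (α i:ℝ)), abs_pow]
              exact add_le_add (mul_le_mul_of_nonneg_left hSd (by linarith))
                (mul_le_mul habs hSig2 (by positivity) hρpos.le)
      -- key polynomial inequality
      have hcnd := hcond i
      rw [show (n:ℝ) - (α i:ℝ) = β from by linarith, hnβ] at hcnd
      have hkey : c^2 * β * ((α i:ℝ) * (d - c) + β * (d - 2*c)) ≤
          (d - 2*c) * ((α i:ℝ) * d - c * n) ^ 2 := by
        rw [hnβ]
        exact chebyshev_key_ineq _ _ _ _ ha1 hβ0 hc hd hcnd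
      -- assemble
      rw [herr, ← hgoal_eq, abs_div, abs_mul, abs_pow, abs_pow]
      have hai0 : (0:ℝ) ≤ (α i:ℝ) := by linarith
      have hNnn : (0:ℝ) ≤ (α i:ℝ) * (β * ρ / ((d - c) * (d - 2*c))) + ρ * (β / (d - c)) ^ 2 :=
        add_nonneg
          (mul_nonneg hai0 (div_nonneg (mul_nonneg hβ0 hρpos.le) (mul_nonneg hd1.le hd.le)))
          (mul_nonneg hρpos.le (sq_nonneg _))
      have step1 : |e| ^ 2 * |(α i:ℝ) * (Sig - S) + e * Sig ^ 2| / |Den| ^ 2 ≤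
          ρ ^ 2 * ((α i:ℝ) * (β * ρ / ((d - c) * (d - 2*c))) + ρ * (β / (d - c)) ^ 2) /
            (((α i:ℝ) * d - c * n) / (d - c)) ^ 2 :=
        div_le_div₀ (mul_nonneg (sq_nonneg ρ) hNnn)
          (mul_le_mul (pow_le_pow_left₀ (abs_nonneg _) habs 2) hNb (abs_nonneg _)
            (sq_nonneg ρ))
          (pow_pos hLpos 2) (pow_le_pow_left₀ hLpos.le hDenlb 2)
      refine step1.trans ?_
      rw [div_le_div_iff₀ (pow_pos hLpos 2) (pow_pos hc 2)]
      exact chebyshev_final _ _ _ _ _ _ hc hρpos hd1 hd hkey
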